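/- For an ideal I of a commutative ring R, I is countable strongly annihilated in R if and only if I[[x]], the set of formal power series with all coefficients in I, is countable strongly annihilated in the power series ring R[[x]]. -/

import Mathlib

/-- An ideal `I` is countable strongly annihilated if for each countable subset `S ⊆ I`
and each `b ∉ I` there exists `c` with `c * a = 0` for all `a ∈ S` but `c * b ≠ 0`. -/
def CountableStronglyAnnihilated {R : Type*} [CommRing R] (I : Ideal R) : Prop :=
  ∀ S : Set R, S.Countable → S ⊆ I → ∀ b ∉ I, ∃ c : R, (∀ a ∈ S, c * a = 0) ∧ c * b ≠ 0

/-- `I[[x]]`: the ideal of formal power series all of whose coefficients lie in `I`. -/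
def powerSeriesIdeal {R : Type*} [CommRing R] (I : Ideal R) : Ideal (PowerSeries R) where
  carrier := {f | ∀ n, PowerSeries.coeff n f ∈ I}
  zero_mem' := by intro n; simp
  add_mem' := by
    intro f g hf hg n
    rw [map_add]
    exact I.add_mem (hf n) (hg n)
  smul_mem' := by
    intro c f hf n
    rw [smul_eq_mul, PowerSeries.coeff_mul]
    exact Ideal.sum_mem I fun p _ => I.mul_mem_left _ (hf p.2)

theorem stmt7 {R : Type*} [CommRing R] (I : Ideal R) :
    CountableStronglyAnnihilated I ↔
      CountableStronglyAnnihilated (powerSeriesIdeal I) := by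
  constructor
  · intro h S hS hSI b hb
    -- b ∉ I[[x]] : some coefficient not in I
    have hb' : ∃ n, PowerSeries.coeff n b ∉ I := by
      by_contra hcon
      push_neg at hcon
      exact hb hcon
    obtain ⟨n, hn⟩ := hb'
    set S' : Set R := ⋃ f ∈ S, Set.range (fun k => PowerSeries.coeff k f) with hS'
    have hS'c : S'.Countable :=
      hS.biUnion fun f _ => Set.countable_range _
    have hS'I : S' ⊆ I := by
      intro x hx
      simp only [hS', Set.mem_iUnion] at hx
      obtain ⟨f, hf, k, rfl⟩ := hx
      exact hSI hf k
    obtain ⟨c, hc1, hc2⟩ := h S' hS'c hS'I _ hn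
    refine ⟨PowerSeries.C c, ?_, ?_⟩
    · intro f hf
      ext k
      rw [PowerSeries.coeff_C_mul, map_zero]
      exact hc1 _ (Set.mem_biUnion hf ⟨k, rfl⟩)
    · intro hzero
      apply hc2
      have := congrArg (PowerSeries.coeff n) hzero
      rwa [PowerSeries.coeff_C_mul, map_zero] at this
  · intro h S hS hSI b hb
    have hCb : (PowerSeries.C b) ∉ powerSeriesIdeal I := by
      intro hmem
      have := hmem 0
      rw [PowerSeries.coeff_zero_C] at this; exact hb this
    obtain ⟨c, hc1, hc2⟩ := h (PowerSeries.C '' S) (hS.image _)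
      (by rintro _ ⟨a, ha, rfl⟩ k
          rcases eq_or_ne k 0 with rfl | hk
          · rw [PowerSeries.coeff_zero_C]; exact hSI ha
          · rw [PowerSeries.coeff_C, if_neg hk]; exact I.zero_mem) _ hCb
    have : ∃ n, PowerSeries.coeff n (c * PowerSeries.C b) ≠ 0 := by
      by_contra hcon
      push_neg at hcon
      exact hc2 (PowerSeries.ext hcon)
    obtain ⟨n, hn⟩ := this
    refine ⟨PowerSeries.coeff n c, ?_, ?_⟩
    · intro a ha
      have := hc1 _ (Set.mem_image_of_mem _ ha)
      have := congrArg (PowerSeries.coeff n) this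
      rwa [PowerSeries.coeff_mul_C, map_zero] at this
    · rwa [PowerSeries.coeff_mul_C] at hn
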